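/- Let m, M, N ∈ ℕ and let A_ℓ ∈ ℝ^{m×m} be given for each multi-index ℓ ∈ ℕ^M with |ℓ| ≤ N. Suppose U_n : ℝ → ℝ^m are differentiable functions, for multi-indices |n| ≤ N, satisfying U_n′(t) = Σ_{|ℓ| ≤ N−|n|} A_ℓ U_{ℓ+n}(t) for all t and all |n| ≤ N. Define the ℝ^m-valued polynomial of degree ≤ N in ξ ∈ ℝ^M, Ũ(t), whose ξⁿ-coefficient is U_n(t)/n!. Then, as an identity of ℝ^m-valued polynomials for every t, ∂ₜŨ(t) = Σ_{|ℓ| ≤ N} A_ℓ ∂_ξ^ℓ Ũ(t). -/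

import Mathlib

/-- total degree `|n| = n₁ + ⋯ + n_M` of a multi-index. -/
def mdeg {M : ℕ} (n : Fin M → ℕ) : ℕ := ∑ i, n i

/-- multi-index factorial `n! = n₁!⋯n_M!`. -/
def mfact {M : ℕ} (n : Fin M → ℕ) : ℕ := ∏ i, Nat.factorial (n i)

/-- the finite set of multi-indices in `ℕ^M` of total degree at most `d`. -/
def mIdxLe (M d : ℕ) : Finset (Fin M → ℕ) :=
  (Fintype.piFinset fun _ : Fin M => Finset.range (d + 1)).filter fun n => mdeg n ≤ d

/-- the finite set of multi-indices `k ≤ n` (componentwise). -/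
def mIic {M : ℕ} (n : Fin M → ℕ) : Finset (Fin M → ℕ) :=
  Fintype.piFinset fun i => Finset.range (n i + 1)

/-- A `U`-valued polynomial of degree ≤ N in `ξ ∈ ℝ^M` is represented by its family of
`ξ^k`-coefficients (zero beyond degree `N`).  `pder ℓ` is the formal derivative `∂_ξ^ℓ`,
sending the coefficient family `c` to the one whose `ξ^k`-coefficient is
`((k+ℓ)!/k!) c_{k+ℓ}`. -/
noncomputable def pder {M : ℕ} {U : Type*} [AddCommGroup U] [Module ℝ U]
    (ℓ : Fin M → ℕ) (c : (Fin M → ℕ) → U) : (Fin M → ℕ) → U :=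
  fun k => ((mfact (k + ℓ) : ℝ) / (mfact k : ℝ)) • c (k + ℓ)

/-- the `U`-valued polynomial of degree ≤ N whose `ξⁿ/n!`-coefficient is `u_n`, i.e. whose
`ξⁿ`-coefficient is `u_n/n!` for `|n| ≤ N` and `0` otherwise. -/
noncomputable def genPoly {M : ℕ} {U : Type*} [AddCommGroup U] [Module ℝ U]
    (N : ℕ) (u : (Fin M → ℕ) → U) : (Fin M → ℕ) → U :=
  fun n => if mdeg n ≤ N then ((mfact n : ℝ))⁻¹ • u n else 0

/-- If the amplitudes satisfy `U_n′(t) = Σ_{|ℓ| ≤ N−|n|} A_ℓ U_{ℓ+n}(t)`, then the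
generating multinomial `Ũ(t)` (with `ξⁿ`-coefficient `U_n(t)/n!`) satisfies,
coefficient-wise, the `N`th-order model PDE `∂ₜŨ = Σ_{|ℓ| ≤ N} A_ℓ ∂_ξ^ℓ Ũ`. -/

lemma mfact_pos {M : ℕ} (n : Fin M → ℕ) : 0 < mfact n :=
  Finset.prod_pos fun i _ => Nat.factorial_pos _

lemma mdeg_add {M : ℕ} (a b : Fin M → ℕ) : mdeg (a + b) = mdeg a + mdeg b := by
  simp [mdeg, Finset.sum_add_distrib]

lemma mem_mIdxLe {M d : ℕ} {n : Fin M → ℕ} : n ∈ mIdxLe M d ↔ mdeg n ≤ d := by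
  simp only [mIdxLe, Finset.mem_filter, Fintype.mem_piFinset, Finset.mem_range,
    Nat.lt_succ_iff]
  refine ⟨fun h => h.2, fun h => ⟨fun i => le_trans ?_ h, h⟩⟩
  exact Finset.single_le_sum (f := fun i => n i) (fun j _ => Nat.zero_le _)
    (Finset.mem_univ i)

theorem genPoly_satisfies_model_pde
    (m M N : ℕ)
    (A : (Fin M → ℕ) → Matrix (Fin m) (Fin m) ℝ)
    (Uamp : (Fin M → ℕ) → ℝ → Fin m → ℝ)
    (hode : ∀ n : Fin M → ℕ, mdeg n ≤ N → ∀ t : ℝ,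
      HasDerivAt (Uamp n)
        (∑ ℓ ∈ mIdxLe M (N - mdeg n), (A ℓ).mulVec (Uamp (ℓ + n) t)) t) :
    ∀ κ : Fin M → ℕ, mdeg κ ≤ N → ∀ t : ℝ,
      HasDerivAt (fun s => genPoly N (fun n => Uamp n s) κ)
        (∑ ℓ ∈ mIdxLe M N, (A ℓ).mulVec (pder ℓ (genPoly N (fun n => Uamp n t)) κ)) t := by
  intro κ hκ t
  have hne : (mfact κ : ℝ) ≠ 0 := Nat.cast_ne_zero.mpr (mfact_pos κ).ne'
  have h1 : (fun s => genPoly N (fun n => Uamp n s) κ)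
      = fun s => (mfact κ : ℝ)⁻¹ • Uamp κ s := by
    funext s; simp [genPoly, hκ]
  rw [h1]
  have hd := (hode κ hκ t).const_smul ((mfact κ : ℝ)⁻¹)
  convert hd using 1
  case e'_4 => rfl
  case e'_5 => rfl
  case e'_6 => rfl
  case e'_8 => rfl
  rw [Finset.smul_sum]
  have hsub : mIdxLe M (N - mdeg κ) ⊆ mIdxLe M N := fun ℓ hℓ =>
    mem_mIdxLe.mpr (le_trans (mem_mIdxLe.mp hℓ) (Nat.sub_le _ _))
  rw [← Finset.sum_subset hsub ?h0]
  · refine Finset.sum_congr rfl fun ℓ hℓ => ?_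
    have hℓ' : mdeg ℓ + mdeg κ ≤ N := (Nat.le_sub_iff_add_le hκ).mp (mem_mIdxLe.mp hℓ)
    have hk : mdeg (κ + ℓ) ≤ N := by rw [mdeg_add]; omega
    have hne2 : (mfact (κ + ℓ) : ℝ) ≠ 0 := Nat.cast_ne_zero.mpr (mfact_pos _).ne'
    have hadd : κ + ℓ = ℓ + κ := add_comm _ _
    simp only [pder, genPoly, hk, if_pos, smul_smul]
    rw [div_mul_eq_mul_div, mul_inv_cancel₀ hne2, hadd, Matrix.mulVec_smul]
    rw [one_div]
  · intro ℓ _ hℓ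
    have : ¬ mdeg (κ + ℓ) ≤ N := by
      rw [mdeg_add]
      intro h
      exact hℓ (mem_mIdxLe.mpr ((Nat.le_sub_iff_add_le hκ).mpr (by omega)))
    simp [pder, genPoly, this]
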